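/- arXiv:0803.3522 — 3 statements merged into one kernel-verified Lean document; each statement's English description precedes it below -/
import Mathlib

section
/- Let (D_n)_{n∈ℕ} be a sequence of partitions 0 < t_1^n < ⋯ < t_{N_n}^n = 1 of (0,1] satisfying condition (M): the mesh sup_i (t_{i+1}^n − t_i^n) tends to 0 as n → ∞, and M := sup_n sup_i (t_{i+1}^n / t_i^n) < ∞. Fix 0 ≤ a < b ≤ 1 and t ∈ (0,1]. Then lim_{n→∞} ∫₀^t ( ∑_{t_i ∈ D_n, t_i ≤ t} 1_{(a,b]}(t_i) · t_i^{-1/2} · 1_{(t_i, t_{i+1}]}(s) ) ds = ∫₀^t 1_{(a,b]}(s) s^{-1/2} ds. -/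
open MeasureTheory Filter Topology

private lemma partition_mono {N : ℕ} {τ : ℕ → ℝ} (hmono : ∀ i < N, τ i < τ (i + 1)) :
    ∀ q ≤ N, ∀ p ≤ q, τ p ≤ τ q := by
  intro q hq
  induction q with
  | zero => intro p hp; rw [Nat.le_zero.mp hp]
  | succ k ih =>
      intro p hp
      rcases Nat.eq_or_lt_of_le hp with h | h
      · rw [h]
      · exact le_trans (ih (by omega) p (by omega)) (le_of_lt (hmono k (by omega)))

private lemma sum_eval {N : ℕ} {τ : ℕ → ℝ} (hmono : ∀ i < N, τ i < τ (i + 1))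
    (c : ℕ → ℝ) {s : ℝ} (h0 : τ 0 < s) (hsN : s ≤ τ N) :
    ∃ i < N, τ i < s ∧ s ≤ τ (i + 1) ∧
      (∑ j ∈ Finset.range N, c j * (Set.Ioc (τ j) (τ (j + 1))).indicator 1 s) = c i := by
  have hN : 0 < N := by
    rcases Nat.eq_zero_or_pos N with h | h
    · subst h; linarith
    · exact h
  have hP : s ≤ τ ((N - 1) + 1) := by
    have h : N - 1 + 1 = N := by omega
    rwa [h]
  classical
  have hex : ∃ j, s ≤ τ (j + 1) := ⟨N - 1, hP⟩
  set i := Nat.find hex with hi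
  have hspec : s ≤ τ (i + 1) := Nat.find_spec hex
  have hile : i ≤ N - 1 := Nat.find_min' hex hP
  have hiN : i < N := by omega
  have hτis : τ i < s := by
    rcases Nat.eq_zero_or_pos i with h | h
    · rwa [h]
    · have := Nat.find_min hex (m := i - 1) (by omega)
      push_neg at this
      have heq : i - 1 + 1 = i := by omega
      rwa [heq] at this
  refine ⟨i, hiN, hτis, hspec, ?_⟩
  rw [Finset.sum_eq_single_of_mem i (Finset.mem_range.mpr hiN)]
  · rw [Set.indicator_of_mem (Set.mem_Ioc.mpr ⟨hτis, hspec⟩)]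
    simp
  · intro j hj hji
    rw [Set.indicator_of_notMem, mul_zero]
    rw [Set.mem_Ioc]
    push_neg
    intro hjs
    rcases lt_or_gt_of_ne hji with h | h
    · have : τ (j + 1) ≤ τ i := partition_mono hmono i (le_of_lt hiN) (j + 1) h
      linarith
    · have : τ (i + 1) ≤ τ j := partition_mono hmono j (le_of_lt (Finset.mem_range.mp hj)) (i + 1) h
      linarith

/-- Let `(D_n)` be a sequence of partitions `0 < t_1^n < ⋯ < t_{N_n}^n = 1` of `(0,1]`
satisfying condition (M): the mesh tends to `0` (including the initial gap `t_1^n`,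
since `D_n` partitions `(0,1]`) and the ratios `t_{i+1}^n / t_i^n` are uniformly
bounded.  Fix `0 ≤ a < b ≤ 1` and `t ∈ (0,1]`.  Then
`∫₀^t ∑_{t_i ∈ D_n, t_i ≤ t} 1_{(a,b]}(t_i) t_i^(-1/2) 1_{(t_i,t_{i+1}]}(s) ds
  → ∫₀^t 1_{(a,b]}(s) s^(-1/2) ds`.
Here `τ n i` is the `(i+1)`-st point of `D_n` (so `τ n 0 = t_1^n` and
`τ n (N n) = t_{N_n}^n = 1`). -/
theorem stmt_4 (N : ℕ → ℕ) (τ : ℕ → ℕ → ℝ)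
    (hpos : ∀ n, 0 < τ n 0)
    (hmono : ∀ n, ∀ i < N n, τ n i < τ n (i + 1))
    (hone : ∀ n, τ n (N n) = 1)
    (hmesh : ∀ ε > (0 : ℝ), ∃ n₀ : ℕ, ∀ n ≥ n₀,
      τ n 0 < ε ∧ ∀ i < N n, τ n (i + 1) - τ n i < ε)
    (M : ℝ) (hM : ∀ n, ∀ i < N n, τ n (i + 1) ≤ M * τ n i)
    (a b : ℝ) (ha : 0 ≤ a) (hab : a < b) (hb : b ≤ 1)
    (t : ℝ) (ht : t ∈ Set.Ioc (0 : ℝ) 1) :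
    Tendsto
      (fun n : ℕ => ∫ s in Set.Ioc (0 : ℝ) t,
        ∑ i ∈ Finset.range (N n),
          if τ n i ≤ t then
            (Set.Ioc a b).indicator 1 (τ n i) * (τ n i) ^ (-(1 : ℝ) / 2) *
              (Set.Ioc (τ n i) (τ n (i + 1))).indicator 1 s
          else 0)
      atTop
      (𝓝 (∫ s in Set.Ioc (0 : ℝ) t, (Set.Ioc a b).indicator 1 s * s ^ (-(1 : ℝ) / 2))) := by
  classical
  set c : ℕ → ℕ → ℝ := fun n i => if τ n i ≤ t then
      (Set.Ioc a b).indicator 1 (τ n i) * (τ n i) ^ (-(1 : ℝ) / 2) else 0 with hc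
  have key : ∀ n (s : ℝ),
      (∑ i ∈ Finset.range (N n),
        if τ n i ≤ t then
          (Set.Ioc a b).indicator 1 (τ n i) * (τ n i) ^ (-(1 : ℝ) / 2) *
            (Set.Ioc (τ n i) (τ n (i + 1))).indicator 1 s
        else 0)
      = ∑ i ∈ Finset.range (N n),
          c n i * (Set.Ioc (τ n i) (τ n (i + 1))).indicator 1 s := by
    intro n s
    refine Finset.sum_congr rfl fun i _ => ?_
    simp only [hc]
    split_ifs <;> ring
  simp only [key]
  -- M > 1
  obtain ⟨n₁, hn₁⟩ := hmesh (1/2) (by norm_num)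
  have hn₁' := (hn₁ n₁ le_rfl).1
  have hNn₁ : 0 < N n₁ := by
    by_contra h
    have h0 : N n₁ = 0 := by omega
    have := hone n₁
    rw [h0] at this
    rw [this] at hn₁'
    norm_num at hn₁'
  have hM1 : 1 < M := by
    have h1 := hM n₁ 0 hNn₁
    have h2 := hmono n₁ 0 hNn₁
    have h3 := hpos n₁
    nlinarith
  have hM0 : (0:ℝ) < M := by linarith
  have hτpos : ∀ n, ∀ i ≤ N n, 0 < τ n i := fun n i hi =>
    lt_of_lt_of_le (hpos n) (partition_mono (hmono n) i hi 0 (Nat.zero_le _))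
  apply tendsto_integral_of_dominated_convergence
    (fun s => M ^ ((1:ℝ)/2) * s ^ (-(1:ℝ)/2))
  · intro n
    apply Measurable.aestronglyMeasurable
    apply Finset.measurable_sum
    intro i _
    exact (measurable_one.indicator measurableSet_Ioc).const_mul _
  · have h1 : IntervalIntegrable (fun s : ℝ => s ^ (-(1:ℝ)/2)) volume 0 t :=
      intervalIntegral.intervalIntegrable_rpow' (by norm_num)
    have h2 := (h1.const_mul (M ^ ((1:ℝ)/2)))
    rw [intervalIntegrable_iff_integrableOn_Ioc_of_le ht.1.le] at h2
    exact h2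
  · intro n
    filter_upwards [ae_restrict_mem measurableSet_Ioc] with s hs
    obtain ⟨hs0, hst⟩ := hs
    rcases le_or_gt s (τ n 0) with h0 | h0
    · have hz : (∑ i ∈ Finset.range (N n),
          c n i * (Set.Ioc (τ n i) (τ n (i + 1))).indicator 1 s) = 0 := by
        refine Finset.sum_eq_zero fun i hi => ?_
        rw [Set.indicator_of_notMem, mul_zero]
        rw [Set.mem_Ioc]
        push_neg
        intro h1
        exfalso
        have : τ n 0 ≤ τ n i :=
          partition_mono (hmono n) i (le_of_lt (Finset.mem_range.mp hi)) 0 (Nat.zero_le _)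
        linarith
      rw [hz, norm_zero]
      positivity
    · have hsN : s ≤ τ n (N n) := by rw [hone n]; linarith [ht.2]
      obtain ⟨i, hiN, hτis, hsτ, hsum⟩ := sum_eval (hmono n) (c n) h0 hsN
      rw [hsum]
      have hτi : 0 < τ n i := hτpos n i (le_of_lt hiN)
      have hMi := hM n i hiN
      have hsM : s / M ≤ τ n i := by
        rw [div_le_iff₀ hM0]
        nlinarith
      have h1 : ‖c n i‖ ≤ (τ n i) ^ (-(1:ℝ)/2) := by
        simp only [hc]
        split_ifs with h
        · by_cases hmem : τ n i ∈ Set.Ioc a b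
          · rw [Set.indicator_of_mem hmem]
            simp only [Pi.one_apply, one_mul]
            rw [Real.norm_eq_abs, abs_of_nonneg (by positivity)]
          · rw [Set.indicator_of_notMem hmem, zero_mul, norm_zero]
            positivity
        · rw [norm_zero]; positivity
      have h2 : (τ n i) ^ (-(1:ℝ)/2) ≤ (s / M) ^ (-(1:ℝ)/2) :=
        Real.rpow_le_rpow_of_nonpos (by positivity) hsM (by norm_num)
      have h3 : (s / M) ^ (-(1:ℝ)/2) = M ^ ((1:ℝ)/2) * s ^ (-(1:ℝ)/2) := by
        rw [div_eq_mul_inv, Real.mul_rpow hs0.le (inv_nonneg.mpr hM0.le),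
          Real.inv_rpow hM0.le, ← Real.rpow_neg hM0.le]
        norm_num
        ring
      linarith
  · filter_upwards [ae_restrict_mem measurableSet_Ioc] with s hs
    obtain ⟨hs0, hst⟩ := hs
    rw [Metric.tendsto_atTop]
    intro ε hε
    have hcont : ContinuousAt (fun x : ℝ => x ^ (-(1:ℝ)/2)) s :=
      Real.continuousAt_rpow_const s _ (Or.inl (ne_of_gt hs0))
    obtain ⟨δ, hδ0, hδ⟩ := Metric.continuousAt_iff.mp hcont ε hε
    have hd : ∃ d > (0:ℝ), ∀ x : ℝ, s - d < x → x < s →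
        (Set.Ioc a b).indicator (1 : ℝ → ℝ) x = (Set.Ioc a b).indicator 1 s := by
      rcases le_or_gt s a with h | h
      · refine ⟨1, one_pos, fun x h1 h2 => ?_⟩
        rw [Set.indicator_of_notMem, Set.indicator_of_notMem]
        · rw [Set.mem_Ioc]; push_neg; intro hax; linarith
        · rw [Set.mem_Ioc]; push_neg; intro hax; linarith
      rcases le_or_gt s b with h' | h'
      · refine ⟨s - a, by linarith, fun x h1 h2 => ?_⟩
        rw [Set.indicator_of_mem (Set.mem_Ioc.mpr ⟨by linarith, by linarith⟩),
          Set.indicator_of_mem (Set.mem_Ioc.mpr ⟨h, h'⟩)]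
        simp
      · refine ⟨s - b, by linarith, fun x h1 h2 => ?_⟩
        rw [Set.indicator_of_notMem, Set.indicator_of_notMem]
        · rw [Set.mem_Ioc]; push_neg; intro hax; linarith
        · rw [Set.mem_Ioc]; push_neg; intro hax; linarith
    obtain ⟨d, hd0, hdprop⟩ := hd
    set ε' := min δ (min d (s/2)) with hε'
    have hε'0 : 0 < ε' := lt_min hδ0 (lt_min hd0 (by linarith))
    have hε'δ : ε' ≤ δ := min_le_left _ _
    have hε'd : ε' ≤ d := le_trans (min_le_right _ _) (min_le_left _ _)
    have hε's : ε' ≤ s / 2 := le_trans (min_le_right _ _) (min_le_right _ _)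
    obtain ⟨n₀, hn₀⟩ := hmesh ε' hε'0
    refine ⟨n₀, fun n hn => ?_⟩
    obtain ⟨hτ0, hmesh'⟩ := hn₀ n hn
    have h0 : τ n 0 < s := by linarith
    have hsN : s ≤ τ n (N n) := by rw [hone n]; linarith [ht.2]
    obtain ⟨i, hiN, hτis, hsτ, hsum⟩ := sum_eval (hmono n) (c n) h0 hsN
    rw [hsum]
    have hτilb : s - ε' < τ n i := by
      have := hmesh' i hiN
      linarith
    have hci : c n i = (Set.Ioc a b).indicator 1 s * (τ n i) ^ (-(1:ℝ)/2) := by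
      simp only [hc]
      rw [if_pos (le_trans (le_of_lt hτis) hst)]
      rw [hdprop (τ n i) (by linarith) hτis]
    rw [hci]
    by_cases hmem : s ∈ Set.Ioc a b
    · rw [Set.indicator_of_mem hmem]
      simp only [Pi.one_apply, one_mul]
      apply hδ
      rw [Real.dist_eq, abs_of_nonpos (by linarith)]
      linarith
    · rw [Set.indicator_of_notMem hmem, zero_mul, zero_mul, dist_self]
      exact hε
end

section
/- Let (D_n)_{n∈ℕ} be a sequence of partitions 0 < t_1^n < ⋯ < t_{N_n}^n = 1 of (0,1] satisfying condition (M): the mesh sup_i (t_{i+1}^n − t_i^n) tends to 0 as n → ∞, and M := sup_n sup_i (t_{i+1}^n / t_i^n) < ∞. Let f_Δ be an elementary function and let t ∈ (0,1]. Then liminf_{n→∞} ∑_{t_i ∈ D_n, t_i ≤ t} (t_{i+1} − t_i) · t_i^{-1/2} · ∫_ℝ f_Δ(x, t_i)² dx ≤ ∫₀^t ∫_ℝ f_Δ(x,s)² s^{-1/2} dx ds. -/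
open MeasureTheory Filter Topology

/-- An elementary function:
`f_Δ(x,s) = ∑_{k,l} f_{kl} 1_{(x_k, x_{k+1}]}(x) 1_{(s_l, s_{l+1}]}(s)` where
`x_1 < ⋯ < x_{m₁+1}` are reals and `0 ≤ s_1 < ⋯ < s_{m₂+1} ≤ 1`. -/
def IsElementary (g : ℝ × ℝ → ℝ) : Prop :=
  ∃ (m₁ m₂ : ℕ) (xs : Fin (m₁ + 1) → ℝ) (ss : Fin (m₂ + 1) → ℝ) (c : Fin m₁ → Fin m₂ → ℝ),
    StrictMono xs ∧ StrictMono ss ∧ 0 ≤ ss 0 ∧ ss (Fin.last m₂) ≤ 1 ∧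
    ∀ p : ℝ × ℝ, g p = ∑ k : Fin m₁, ∑ l : Fin m₂,
      c k l * (Set.Ioc (xs k.castSucc) (xs k.succ)).indicator 1 p.1 *
        (Set.Ioc (ss l.castSucc) (ss l.succ)).indicator 1 p.2

private lemma sq_sum_ortho {ι : Type*} [Fintype ι] [DecidableEq ι] (b a : ι → ℝ)
    (h : ∀ i j, a i * a j = if i = j then a i else 0) :
    (∑ i, b i * a i) ^ 2 = ∑ i, b i ^ 2 * a i := by
  rw [sq, Finset.sum_mul_sum]
  have key : ∀ i j : ι, (b i * a i) * (b j * a j) = if i = j then b i ^ 2 * a i else 0 := by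
    intro i j
    have h1 := h i j
    by_cases hij : i = j
    · subst hij
      rw [if_pos rfl] at h1 ⊢
      calc b i * a i * (b i * a i) = b i ^ 2 * (a i * a i) := by ring
        _ = b i ^ 2 * a i := by rw [h1]
    · rw [if_neg hij] at h1 ⊢
      calc b i * a i * (b j * a j) = (b i * b j) * (a i * a j) := by ring
        _ = 0 := by rw [h1]; ring
  calc ∑ i, ∑ j, (b i * a i) * (b j * a j)
      = ∑ i, ∑ j, (if i = j then b i ^ 2 * a i else 0) :=
        Finset.sum_congr rfl fun i _ => Finset.sum_congr rfl fun j _ => key i j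
    _ = ∑ i, b i ^ 2 * a i := by
        refine Finset.sum_congr rfl fun i _ => ?_
        simp

private lemma exists_straddle (f : ℕ → ℝ) (s : ℝ) :
    ∀ m : ℕ, f 0 < s → s ≤ f m → ∃ i < m, f i < s ∧ s ≤ f (i + 1) := by
  intro m
  induction m with
  | zero => intro h1 h2; exact absurd (h1.trans_le h2) (lt_irrefl _)
  | succ m ih =>
    intro h1 h2
    by_cases h : s ≤ f m
    · obtain ⟨i, hi, h3, h4⟩ := ih h1 h
      exact ⟨i, Nat.lt_succ_of_lt hi, h3, h4⟩
    · exact ⟨m, Nat.lt_succ_self m, lt_of_not_ge h, h2⟩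

private lemma mono_part (f : ℕ → ℝ) (m : ℕ) (h : ∀ i < m, f i < f (i + 1)) :
    ∀ i j, i ≤ j → j ≤ m → f i ≤ f j := by
  intro i j hij hjm
  induction j with
  | zero =>
    have : i = 0 := Nat.le_zero.mp hij
    rw [this]
  | succ j ih =>
    rcases Nat.eq_or_lt_of_le hij with h1 | h1
    · rw [h1]
    · have h2 : f i ≤ f j := ih (Nat.lt_succ_iff.mp h1) (le_trans (Nat.le_succ j) hjm)
      exact h2.trans (h j (Nat.lt_of_succ_le hjm)).le

private lemma ind_mul_self (S : Set ℝ) (x : ℝ) :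
    S.indicator (1 : ℝ → ℝ) x * S.indicator 1 x = S.indicator 1 x := by
  by_cases h : x ∈ S <;> simp [h]

private lemma ind_disj (a b a' b' x : ℝ) (h : b ≤ a') :
    (Set.Ioc a b).indicator (1 : ℝ → ℝ) x * (Set.Ioc a' b').indicator 1 x = 0 := by
  by_cases hx : x ∈ Set.Ioc a b
  · have hx' : x ∉ Set.Ioc a' b' := fun hx' => absurd (hx.2.trans h) (not_le.2 hx'.1)
    simp [hx']
  · simp [hx]

private lemma mul_ind (C : ℝ) (S : Set ℝ) (x : ℝ) :
    C * S.indicator (1 : ℝ → ℝ) x = S.indicator (fun _ => C) x := by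
  by_cases h : x ∈ S <;> simp [h]

set_option maxHeartbeats 1000000 in
/-- Let `(D_n)` be a sequence of partitions `0 < t_1^n < ⋯ < t_{N_n}^n = 1` of `(0,1]`
satisfying condition (M), let `f_Δ` be an elementary function and `t ∈ (0,1]`.  Then
`liminf_n ∑_{t_i ∈ D_n, t_i ≤ t} (t_{i+1} - t_i) t_i^(-1/2) ∫_ℝ f_Δ(x,t_i)² dx
  ≤ ∫₀^t ∫_ℝ f_Δ(x,s)² s^(-1/2) dx ds`.
Here `τ n i` is the `(i+1)`-st point of `D_n` (so `τ n 0 = t_1^n` and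
`τ n (N n) = 1`). -/
theorem stmt_5 (N : ℕ → ℕ) (τ : ℕ → ℕ → ℝ)
    (hpos : ∀ n, 0 < τ n 0)
    (hmono : ∀ n, ∀ i < N n, τ n i < τ n (i + 1))
    (hone : ∀ n, τ n (N n) = 1)
    (hmesh : ∀ ε > (0 : ℝ), ∃ n₀ : ℕ, ∀ n ≥ n₀,
      τ n 0 < ε ∧ ∀ i < N n, τ n (i + 1) - τ n i < ε)
    (M : ℝ) (hM : ∀ n, ∀ i < N n, τ n (i + 1) ≤ M * τ n i)
    (fΔ : ℝ × ℝ → ℝ) (hfΔ : IsElementary fΔ)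
    (t : ℝ) (ht : t ∈ Set.Ioc (0 : ℝ) 1) :
    Filter.liminf
      (fun n : ℕ => ∑ i ∈ Finset.range (N n),
        if τ n i ≤ t then
          (τ n (i + 1) - τ n i) * (τ n i) ^ (-(1 : ℝ) / 2) * ∫ x : ℝ, (fΔ (x, τ n i)) ^ 2
        else 0)
      atTop
      ≤ ∫ s in Set.Ioc (0 : ℝ) t, ∫ x : ℝ, (fΔ (x, s)) ^ 2 * s ^ (-(1 : ℝ) / 2) := by
  obtain ⟨m₁, m₂, xs, ss, c, hxs, hss, hs0, hs1, hrep⟩ := hfΔ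
  obtain ⟨ht0, ht1⟩ := ht
  have hwidth : ∀ k : Fin m₁, xs k.castSucc ≤ xs k.succ :=
    fun k => (hxs (Fin.castSucc_lt_succ : k.castSucc < k.succ)).le
  -- orthogonality of the x-indicators
  have hIortho : ∀ (k k' : Fin m₁) (x : ℝ),
      (Set.Ioc (xs k.castSucc) (xs k.succ)).indicator (1 : ℝ → ℝ) x *
        (Set.Ioc (xs k'.castSucc) (xs k'.succ)).indicator 1 x =
      if k = k' then (Set.Ioc (xs k.castSucc) (xs k.succ)).indicator 1 x else 0 := by
    intro k k' x
    by_cases h : k = k'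
    · subst h; rw [if_pos rfl]; exact ind_mul_self _ _
    · rw [if_neg h]
      have key : ∀ p q : Fin m₁, p < q →
          (Set.Ioc (xs p.castSucc) (xs p.succ)).indicator (1 : ℝ → ℝ) x *
            (Set.Ioc (xs q.castSucc) (xs q.succ)).indicator 1 x = 0 := by
        intro p q hpq
        refine ind_disj _ _ _ _ _ (hxs.monotone ?_)
        rw [Fin.le_def]
        have := hpq
        rw [Fin.lt_def] at this
        simp only [Fin.val_succ, Fin.coe_castSucc]
        omega
      rcases lt_or_gt_of_ne h with h1 | h1
      · exact key _ _ h1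
      · rw [mul_comm]; exact key _ _ h1
  have hJortho : ∀ (l l' : Fin m₂) (s : ℝ),
      (Set.Ioc (ss l.castSucc) (ss l.succ)).indicator (1 : ℝ → ℝ) s *
        (Set.Ioc (ss l'.castSucc) (ss l'.succ)).indicator 1 s =
      if l = l' then (Set.Ioc (ss l.castSucc) (ss l.succ)).indicator 1 s else 0 := by
    intro l l' s
    by_cases h : l = l'
    · subst h; rw [if_pos rfl]; exact ind_mul_self _ _
    · rw [if_neg h]
      have key : ∀ p q : Fin m₂, p < q →
          (Set.Ioc (ss p.castSucc) (ss p.succ)).indicator (1 : ℝ → ℝ) s *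
            (Set.Ioc (ss q.castSucc) (ss q.succ)).indicator 1 s = 0 := by
        intro p q hpq
        refine ind_disj _ _ _ _ _ (hss.monotone ?_)
        rw [Fin.le_def]
        have := hpq
        rw [Fin.lt_def] at this
        simp only [Fin.val_succ, Fin.coe_castSucc]
        omega
      rcases lt_or_gt_of_ne h with h1 | h1
      · exact key _ _ h1
      · rw [mul_comm]; exact key _ _ h1
  -- pointwise square formula
  have hsq : ∀ x s : ℝ, fΔ (x, s) ^ 2 = ∑ k : Fin m₁, ∑ l : Fin m₂,
      (c k l) ^ 2 * (Set.Ioc (xs k.castSucc) (xs k.succ)).indicator 1 x *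
        (Set.Ioc (ss l.castSucc) (ss l.succ)).indicator 1 s := by
    intro x s
    have h1 : fΔ (x, s) = ∑ p : Fin m₁ × Fin m₂, c p.1 p.2 *
        ((Set.Ioc (xs p.1.castSucc) (xs p.1.succ)).indicator 1 x *
          (Set.Ioc (ss p.2.castSucc) (ss p.2.succ)).indicator 1 s) := by
      rw [hrep (x, s), Fintype.sum_prod_type]
      exact Finset.sum_congr rfl fun k _ => Finset.sum_congr rfl fun l _ => by ring
    rw [h1, sq_sum_ortho _ _ ?ortho, Fintype.sum_prod_type]
    · exact Finset.sum_congr rfl fun k _ => Finset.sum_congr rfl fun l _ => by ring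
    case ortho =>
      intro p q
      rw [show ((Set.Ioc (xs p.1.castSucc) (xs p.1.succ)).indicator (1 : ℝ → ℝ) x *
            (Set.Ioc (ss p.2.castSucc) (ss p.2.succ)).indicator 1 s) *
          ((Set.Ioc (xs q.1.castSucc) (xs q.1.succ)).indicator 1 x *
            (Set.Ioc (ss q.2.castSucc) (ss q.2.succ)).indicator 1 s) =
          ((Set.Ioc (xs p.1.castSucc) (xs p.1.succ)).indicator 1 x *
            (Set.Ioc (xs q.1.castSucc) (xs q.1.succ)).indicator 1 x) *
          ((Set.Ioc (ss p.2.castSucc) (ss p.2.succ)).indicator 1 s *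
            (Set.Ioc (ss q.2.castSucc) (ss q.2.succ)).indicator 1 s) from by ring,
        hIortho p.1 q.1 x, hJortho p.2 q.2 s]
      by_cases h3 : p.1 = q.1 <;> by_cases h4 : p.2 = q.2 <;>
        simp [h3, h4, Prod.ext_iff]
  -- step coefficients
  set b : Fin m₂ → ℝ := fun l => ∑ k, (c k l) ^ 2 * (xs k.succ - xs k.castSucc) with hbdef
  set φ : ℝ → ℝ :=
    fun s => ∑ l, (Set.Ioc (ss l.castSucc) (ss l.succ)).indicator (fun _ => b l) s with hφdef
  -- integrability / integral of constant indicators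
  have hInt1 : ∀ (C a b' : ℝ),
      Integrable (fun x => (Set.Ioc a b').indicator (fun _ => C) x) := by
    intro C a b'
    rw [show (fun x => (Set.Ioc a b').indicator (fun _ => C) x)
        = (Set.Ioc a b').indicator (fun _ => C) from rfl,
      integrable_indicator_iff measurableSet_Ioc]
    exact integrableOn_const measure_Ioc_lt_top.ne
  have hIntegral_ind : ∀ (C a b' : ℝ), a ≤ b' →
      (∫ x : ℝ, (Set.Ioc a b').indicator (fun _ => C) x) = (b' - a) * C := by
    intro C a b' hab
    rw [integral_indicator_const C measurableSet_Ioc, measureReal_def, Real.volume_Ioc,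
      ENNReal.toReal_ofReal (by linarith), smul_eq_mul]
  -- the x-integral of the square
  have hφ : ∀ s : ℝ, (∫ x : ℝ, fΔ (x, s) ^ 2) = φ s := by
    intro s
    have h1 : (fun x => fΔ (x, s) ^ 2)
        = fun x => ∑ p : Fin m₁ × Fin m₂,
            (Set.Ioc (xs p.1.castSucc) (xs p.1.succ)).indicator
              (fun _ => (c p.1 p.2) ^ 2 *
                (Set.Ioc (ss p.2.castSucc) (ss p.2.succ)).indicator 1 s) x := by
      funext x
      rw [hsq x s, Fintype.sum_prod_type]
      refine Finset.sum_congr rfl fun k _ => Finset.sum_congr rfl fun l _ => ?_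
      rw [← mul_ind]
      ring
    rw [h1, integral_finset_sum _ (fun p _ => hInt1 _ _ _)]
    have h2 : ∀ p : Fin m₁ × Fin m₂,
        (∫ x : ℝ, (Set.Ioc (xs p.1.castSucc) (xs p.1.succ)).indicator
          (fun _ => (c p.1 p.2) ^ 2 *
            (Set.Ioc (ss p.2.castSucc) (ss p.2.succ)).indicator 1 s) x)
        = (xs p.1.succ - xs p.1.castSucc) * ((c p.1 p.2) ^ 2 *
            (Set.Ioc (ss p.2.castSucc) (ss p.2.succ)).indicator 1 s) :=
      fun p => hIntegral_ind _ _ _ (hwidth p.1)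
    rw [Finset.sum_congr rfl fun p _ => h2 p, hφdef]
    simp only []
    rw [Fintype.sum_prod_type, Finset.sum_comm]
    refine Finset.sum_congr rfl fun l _ => ?_
    rw [← mul_ind, hbdef]
    simp only []
    rw [Finset.sum_mul]
    exact Finset.sum_congr rfl fun k _ => by ring
  -- bounds on φ
  have hbnn : ∀ l, 0 ≤ b l :=
    fun l => Finset.sum_nonneg fun k _ => mul_nonneg (sq_nonneg _) (by linarith [hwidth k])
  set B : ℝ := ∑ l, b l with hBdef
  have hBnn : 0 ≤ B := Finset.sum_nonneg fun l _ => hbnn l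
  have hφnn : ∀ s, 0 ≤ φ s :=
    fun s => Finset.sum_nonneg fun l _ => Set.indicator_nonneg (fun _ _ => hbnn l) s
  have hφle : ∀ s, φ s ≤ B := by
    intro s
    refine Finset.sum_le_sum fun l _ => ?_
    by_cases h : s ∈ Set.Ioc (ss l.castSucc) (ss l.succ) <;> simp [h, hbnn l]
  -- partition facts
  have hτmono : ∀ n i j, i ≤ j → j ≤ N n → τ n i ≤ τ n j :=
    fun n => mono_part (τ n) (N n) (hmono n)
  have hτpos : ∀ n i, i ≤ N n → 0 < τ n i :=
    fun n i hi => lt_of_lt_of_le (hpos n) (hτmono n 0 i (Nat.zero_le _) hi)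
  have hM1 : 1 ≤ M := by
    obtain ⟨n₀, hn₀⟩ := hmesh 1 one_pos
    obtain ⟨h1, -⟩ := hn₀ n₀ le_rfl
    have hN : 0 < N n₀ := by
      by_contra h
      push_neg at h
      have h2 : N n₀ = 0 := Nat.le_zero.mp h
      have h3 := hone n₀
      rw [h2] at h3
      linarith
    have h2 := hM n₀ 0 hN
    have h3 := hmono n₀ 0 hN
    have h4 := hpos n₀
    nlinarith
  -- dominating function
  set C : ℝ := M ^ ((1 : ℝ) / 2) * B with hCdef
  have hCnn : 0 ≤ C := mul_nonneg (Real.rpow_nonneg (by linarith) _) hBnn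
  set bound : ℝ → ℝ :=
    fun s => (Set.Ioc (0 : ℝ) 1).indicator (fun u => C * u ^ (-(1 : ℝ) / 2)) s with hbounddef
  set g : ℕ → ℝ → ℝ := fun n s => ∑ i ∈ Finset.range (N n),
      if τ n i ≤ t then (Set.Ioc (τ n i) (τ n (i + 1))).indicator
        (fun _ => (τ n i) ^ (-(1 : ℝ) / 2) * φ (τ n i)) s else 0 with hgdef
  have hterm_int : ∀ n i, Integrable (fun s =>
      if τ n i ≤ t then (Set.Ioc (τ n i) (τ n (i + 1))).indicator
        (fun _ => (τ n i) ^ (-(1 : ℝ) / 2) * φ (τ n i)) s else 0) := by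
    intro n i
    by_cases h : τ n i ≤ t
    · simp only [if_pos h]; exact hInt1 _ _ _
    · simp only [if_neg h]; exact integrable_zero _ _ _
  have hg_int : ∀ n, Integrable (g n) := by
    intro n
    rw [hgdef]
    exact integrable_finset_sum _ (fun i _ => hterm_int n i)
  have hg_eq : ∀ n, (∫ s : ℝ, g n s) = ∑ i ∈ Finset.range (N n),
      if τ n i ≤ t then
        (τ n (i + 1) - τ n i) * (τ n i) ^ (-(1 : ℝ) / 2) * ∫ x : ℝ, (fΔ (x, τ n i)) ^ 2
      else 0 := by
    intro n
    rw [hgdef]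
    simp only []
    rw [integral_finset_sum _ (fun i _ => hterm_int n i)]
    refine Finset.sum_congr rfl fun i hi => ?_
    by_cases h : τ n i ≤ t
    · simp only [if_pos h]
      rw [hIntegral_ind _ _ _ (hmono n i (Finset.mem_range.mp hi)).le, hφ (τ n i)]
      ring
    · simp only [if_neg h, integral_zero]
  -- collapse of the sum to one term
  have hsingle : ∀ n (s : ℝ) i₀, i₀ < N n → τ n i₀ < s → s ≤ τ n (i₀ + 1) →
      g n s = if τ n i₀ ≤ t then (τ n i₀) ^ (-(1 : ℝ) / 2) * φ (τ n i₀) else 0 := by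
    intro n s i₀ hi₀ h1 h2
    rw [hgdef]
    simp only []
    rw [Finset.sum_eq_single_of_mem i₀ (Finset.mem_range.mpr hi₀)]
    · by_cases h : τ n i₀ ≤ t
      · simp only [if_pos h]
        rw [Set.indicator_of_mem (Set.mem_Ioc.mpr ⟨h1, h2⟩)]
      · simp only [if_neg h]
    · intro j hj hji
      have hjN := Finset.mem_range.mp hj
      have hnot : s ∉ Set.Ioc (τ n j) (τ n (j + 1)) := by
        rcases lt_or_gt_of_ne hji with hlt | hgt
        · have h3 : τ n (j + 1) ≤ τ n i₀ := hτmono n (j + 1) i₀ hlt hi₀.le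
          intro hx
          exact absurd hx.2 (not_le.2 (lt_of_le_of_lt h3 h1))
        · have h3 : τ n (i₀ + 1) ≤ τ n j := hτmono n (i₀ + 1) j hgt hjN.le
          intro hx
          exact absurd hx.1 (not_lt.2 (le_trans h2 h3))
      simp [Set.indicator_of_notMem hnot]
  have hgnn : ∀ n (s : ℝ), 0 ≤ g n s := by
    intro n s
    rw [hgdef]
    refine Finset.sum_nonneg fun i hi => ?_
    by_cases h : τ n i ≤ t
    · simp only [if_pos h]
      refine Set.indicator_nonneg (fun u _ => ?_) s
      exact mul_nonneg
        (Real.rpow_nonneg (hτpos n i (Finset.mem_range.mp hi).le).le _) (hφnn _)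
    · simp [h]
  have hboundnn : ∀ s : ℝ, 0 ≤ bound s := by
    intro s
    rw [hbounddef]
    refine Set.indicator_nonneg (fun u hu => ?_) s
    exact mul_nonneg hCnn (Real.rpow_nonneg hu.1.le _)
  have hbound_int : Integrable bound := by
    rw [hbounddef]
    rw [show (fun s => (Set.Ioc (0 : ℝ) 1).indicator (fun u => C * u ^ (-(1 : ℝ) / 2)) s)
        = (Set.Ioc (0 : ℝ) 1).indicator (fun u => C * u ^ (-(1 : ℝ) / 2)) from rfl,
      integrable_indicator_iff measurableSet_Ioc]
    have h1 : IntervalIntegrable (fun u : ℝ => u ^ (-(1 : ℝ) / 2)) volume 0 1 :=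
      intervalIntegral.intervalIntegrable_rpow' (by norm_num)
    rw [intervalIntegrable_iff_integrableOn_Ioc_of_le zero_le_one] at h1
    exact h1.const_mul C
  -- pointwise bound
  have hle : ∀ n (s : ℝ), g n s ≤ bound s := by
    intro n s
    by_cases hex : ∃ i₀, i₀ < N n ∧ τ n i₀ < s ∧ s ≤ τ n (i₀ + 1)
    · obtain ⟨i₀, hi₀, h1, h2⟩ := hex
      rw [hsingle n s i₀ hi₀ h1 h2]
      have hs01 : s ∈ Set.Ioc (0 : ℝ) 1 := by
        refine ⟨lt_trans (hτpos n i₀ hi₀.le) h1, le_trans h2 ?_⟩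
        rw [← hone n]
        exact hτmono n (i₀ + 1) (N n) hi₀ le_rfl
      rw [hbounddef]
      simp only []
      rw [Set.indicator_of_mem hs01]
      by_cases h : τ n i₀ ≤ t
      · simp only [if_pos h]
        have hτi : 0 < τ n i₀ := hτpos n i₀ hi₀.le
        have hMτ : s ≤ M * τ n i₀ := le_trans h2 (hM n i₀ hi₀)
        have hM0 : 0 < M := by linarith
        have hsM : s / M ≤ τ n i₀ := (div_le_iff₀' hM0).mpr hMτ
        have hsM0 : 0 < s / M := div_pos hs01.1 hM0
        have key : (τ n i₀) ^ (-(1 : ℝ) / 2) ≤ M ^ ((1 : ℝ) / 2) * s ^ (-(1 : ℝ) / 2) := by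
          have h3 : (τ n i₀) ^ (-(1 : ℝ) / 2) ≤ (s / M) ^ (-(1 : ℝ) / 2) :=
            Real.rpow_le_rpow_of_nonpos hsM0 hsM (by norm_num)
          have h4 : (s / M) ^ (-(1 : ℝ) / 2) = M ^ ((1 : ℝ) / 2) * s ^ (-(1 : ℝ) / 2) := by
            rw [neg_div, Real.div_rpow hs01.1.le hM0.le, Real.rpow_neg hM0.le,
              div_inv_eq_mul, mul_comm]
          rw [← h4]; exact h3
        calc (τ n i₀) ^ (-(1 : ℝ) / 2) * φ (τ n i₀)
            ≤ (M ^ ((1 : ℝ) / 2) * s ^ (-(1 : ℝ) / 2)) * B :=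
              mul_le_mul key (hφle _) (hφnn _)
                (mul_nonneg (Real.rpow_nonneg hM0.le _) (Real.rpow_nonneg hs01.1.le _))
          _ = C * s ^ (-(1 : ℝ) / 2) := by rw [hCdef]; ring
      · simp only [if_neg h]
        exact mul_nonneg hCnn (Real.rpow_nonneg hs01.1.le _)
    · have hg0 : g n s = 0 := by
        rw [hgdef]
        refine Finset.sum_eq_zero fun i hi => ?_
        have hiN := Finset.mem_range.mp hi
        have hnot : s ∉ Set.Ioc (τ n i) (τ n (i + 1)) :=
          fun hx => hex ⟨i, hiN, hx.1, hx.2⟩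
        simp [Set.indicator_of_notMem hnot]
      rw [hg0]
      exact hboundnn s
  -- the limit function
  set G : ℝ → ℝ :=
    fun s => (Set.Ioc (0 : ℝ) t).indicator (fun u => φ u * u ^ (-(1 : ℝ) / 2)) s with hGdef
  have hE : ∀ᵐ s : ℝ, s ∉ Set.range ss ∪ {t} :=
    ((Set.countable_range ss).union (Set.countable_singleton t)).ae_notMem volume
  have hlim : ∀ᵐ s : ℝ, Tendsto (fun n => g n s) atTop (𝓝 (G s)) := by
    filter_upwards [hE] with s hsE
    have hsnt : s ≠ t := fun h => hsE (Or.inr h)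
    have hsss : ∀ l, s ≠ ss l := fun l h => hsE (Or.inl ⟨l, h.symm⟩)
    rcases le_or_gt s 0 with hs0 | hs0
    · have h1 : ∀ n, g n s = 0 := by
        intro n
        rw [hgdef]
        refine Finset.sum_eq_zero fun i hi => ?_
        have hnot : s ∉ Set.Ioc (τ n i) (τ n (i + 1)) := fun hx =>
          absurd (lt_trans (hτpos n i (Finset.mem_range.mp hi).le) hx.1) (not_lt.2 hs0)
        simp [Set.indicator_of_notMem hnot]
      have h2 : G s = 0 := by
        rw [hGdef]
        exact Set.indicator_of_notMem (fun hx => absurd hx.1 (not_lt.2 hs0)) _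
      simp only [h1, h2]
      exact tendsto_const_nhds
    rcases lt_or_ge t s with hts | hst
    · have h2 : G s = 0 := by
        rw [hGdef]
        exact Set.indicator_of_notMem (fun hx => absurd hx.2 (not_le.2 hts)) _
      rw [h2]
      obtain ⟨n₀, hn₀⟩ := hmesh (s - t) (by linarith)
      refine tendsto_atTop_of_eventually_const (i₀ := n₀) fun n hn => ?_
      obtain ⟨-, hgap⟩ := hn₀ n hn
      rw [hgdef]
      refine Finset.sum_eq_zero fun i hi => ?_
      by_cases h : τ n i ≤ t
      · have hiN := Finset.mem_range.mp hi
        have h3 : τ n (i + 1) < s := by have := hgap i hiN; linarith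
        have hnot : s ∉ Set.Ioc (τ n i) (τ n (i + 1)) :=
          fun hx => absurd hx.2 (not_le.2 h3)
        simp [Set.indicator_of_notMem hnot]
      · simp [h]
    · have hst' : s < t := lt_of_le_of_ne hst hsnt
      have hG : G s = φ s * s ^ (-(1 : ℝ) / 2) := by
        rw [hGdef]
        exact Set.indicator_of_mem (Set.mem_Ioc.mpr ⟨hs0, hst⟩) _
      rw [hG]
      have hne : (Finset.univ : Finset (Fin (m₂ + 1))).Nonempty := Finset.univ_nonempty
      set η : ℝ := Finset.univ.inf' hne (fun l => |s - ss l|) with hηdef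
      have hηpos : 0 < η := by
        rw [hηdef, Finset.lt_inf'_iff]
        intro l _
        exact abs_pos.mpr (sub_ne_zero.mpr (hsss l))
      have hηle : ∀ l, η ≤ |s - ss l| := fun l => Finset.inf'_le _ (Finset.mem_univ l)
      have hφconst : ∀ u : ℝ, s - η < u → u ≤ s → φ u = φ s := by
        intro u hu1 hu2
        rw [hφdef]
        simp only []
        refine Finset.sum_congr rfl fun l _ => ?_
        by_cases hmem : s ∈ Set.Ioc (ss l.castSucc) (ss l.succ)
        · have h7 := hηle l.castSucc
          rw [abs_of_pos (by linarith [hmem.1])] at h7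
          have humem : u ∈ Set.Ioc (ss l.castSucc) (ss l.succ) :=
            Set.mem_Ioc.mpr ⟨by linarith, le_trans hu2 hmem.2⟩
          rw [Set.indicator_of_mem humem, Set.indicator_of_mem hmem]
        · have hmem' : ¬(ss l.castSucc < s ∧ s ≤ ss l.succ) := by
            simpa [Set.mem_Ioc] using hmem
          by_cases h5 : ss l.castSucc < s
          · have h6 : ss l.succ < s := not_le.mp (fun hh => hmem' ⟨h5, hh⟩)
            have h7 := hηle l.succ
            rw [abs_of_pos (by linarith)] at h7
            have h8 : u ∉ Set.Ioc (ss l.castSucc) (ss l.succ) := by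
              intro hx
              exact absurd hx.2 (not_le.mpr (by linarith))
            rw [Set.indicator_of_notMem h8, Set.indicator_of_notMem hmem]
          · have h6 : s < ss l.castSucc := lt_of_le_of_ne (not_lt.mp h5) (hsss l.castSucc)
            have h8 : u ∉ Set.Ioc (ss l.castSucc) (ss l.succ) := by
              intro hx
              exact absurd hx.1 (not_lt.mpr (by linarith))
            rw [Set.indicator_of_notMem h8, Set.indicator_of_notMem hmem]
      rw [Metric.tendsto_atTop]
      intro ε hε
      have hcont : ContinuousAt (fun u : ℝ => u ^ (-(1 : ℝ) / 2)) s :=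
        Real.continuousAt_rpow_const s _ (Or.inl (ne_of_gt hs0))
      have hε' : 0 < ε / (φ s + 1) := div_pos hε (by linarith [hφnn s])
      obtain ⟨δ₁, hδ₁pos, hδ₁⟩ := Metric.continuousAt_iff.mp hcont (ε / (φ s + 1)) hε'
      set δ : ℝ := min (min δ₁ η) (min s (t - s)) with hδdef
      have hδpos : 0 < δ := lt_min (lt_min hδ₁pos hηpos) (lt_min hs0 (by linarith))
      obtain ⟨n₀, hn₀⟩ := hmesh δ hδpos
      refine ⟨n₀, fun n hn => ?_⟩
      obtain ⟨hfirst, hgap⟩ := hn₀ n hn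
      have hδs : δ ≤ s := le_trans (min_le_right _ _) (min_le_left _ _)
      have hδη : δ ≤ η := le_trans (min_le_left _ _) (min_le_right _ _)
      have hδδ₁ : δ ≤ δ₁ := le_trans (min_le_left _ _) (min_le_left _ _)
      have hδts : δ ≤ t - s := le_trans (min_le_right _ _) (min_le_right _ _)
      have h0s : τ n 0 < s := lt_of_lt_of_le hfirst hδs
      have hsN : s ≤ τ n (N n) := by rw [hone n]; linarith
      obtain ⟨i, hiN, h1, h2⟩ := exists_straddle (τ n) s (N n) h0s hsN
      have hτi_le_t : τ n i ≤ t := by linarith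
      rw [hsingle n s i hiN h1 h2, if_pos hτi_le_t]
      have hgapi : τ n (i + 1) - τ n i < δ := hgap i hiN
      have hφeq : φ (τ n i) = φ s := hφconst (τ n i) (by linarith) h1.le
      rw [hφeq]
      have hdist : dist (τ n i) s < δ₁ := by
        rw [Real.dist_eq, abs_of_neg (by linarith : τ n i - s < 0)]
        linarith
      have hd := hδ₁ hdist
      simp only [Real.dist_eq] at hd ⊢
      have hrw : (τ n i) ^ (-(1 : ℝ) / 2) * φ s - φ s * s ^ (-(1 : ℝ) / 2)
          = φ s * ((τ n i) ^ (-(1 : ℝ) / 2) - s ^ (-(1 : ℝ) / 2)) := by ring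
      rw [hrw, abs_mul, abs_of_nonneg (hφnn s)]
      have hstep : φ s * |(τ n i) ^ (-(1 : ℝ) / 2) - s ^ (-(1 : ℝ) / 2)|
          ≤ φ s * (ε / (φ s + 1)) := mul_le_mul_of_nonneg_left hd.le (hφnn s)
      have hne0 : φ s + 1 ≠ 0 := by linarith [hφnn s]
      have hyy : (φ s + 1) * (ε / (φ s + 1)) = ε := by field_simp
      calc φ s * |(τ n i) ^ (-(1 : ℝ) / 2) - s ^ (-(1 : ℝ) / 2)|
          ≤ φ s * (ε / (φ s + 1)) := hstep
        _ < (φ s + 1) * (ε / (φ s + 1)) := by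
            apply mul_lt_mul_of_pos_right (by linarith) hε'
        _ = ε := hyy
  -- dominated convergence
  have hDCT : Tendsto (fun n => ∫ s : ℝ, g n s) atTop (𝓝 (∫ s : ℝ, G s)) := by
    refine tendsto_integral_of_dominated_convergence bound
      (fun n => (hg_int n).aestronglyMeasurable) hbound_int
      (fun n => Filter.Eventually.of_forall fun s => ?_) hlim
    rw [Real.norm_eq_abs, abs_of_nonneg (hgnn n s)]
    exact hle n s
  have hSlim : Tendsto (fun n : ℕ => ∑ i ∈ Finset.range (N n),
      if τ n i ≤ t then
        (τ n (i + 1) - τ n i) * (τ n i) ^ (-(1 : ℝ) / 2) * ∫ x : ℝ, (fΔ (x, τ n i)) ^ 2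
      else 0) atTop (𝓝 (∫ s : ℝ, G s)) :=
    hDCT.congr fun n => hg_eq n
  have hRHS : (∫ s : ℝ, G s)
      = ∫ s in Set.Ioc (0 : ℝ) t, ∫ x : ℝ, (fΔ (x, s)) ^ 2 * s ^ (-(1 : ℝ) / 2) := by
    rw [hGdef]
    rw [show (fun s => (Set.Ioc (0 : ℝ) t).indicator
        (fun u => φ u * u ^ (-(1 : ℝ) / 2)) s)
        = (Set.Ioc (0 : ℝ) t).indicator (fun u => φ u * u ^ (-(1 : ℝ) / 2)) from rfl,
      integral_indicator measurableSet_Ioc]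
    refine setIntegral_congr_fun measurableSet_Ioc fun s _ => ?_
    rw [integral_mul_const, hφ s]
  rw [hSlim.liminf_eq, hRHS]
end

section
/- Let 0 < t_1 < t_2 < ⋯ < t_N ≤ 1 be a partition with mesh δ := max_{1 ≤ k ≤ N−1} (t_{k+1} − t_k). Then for every index j with 1 ≤ j ≤ N−1, ∑_{i : t_{i+1} ≤ t_j} (t_{i+1} − t_i) t_{i+1}^{-3/4} ∫_{t_j}^{t_{j+1}} (s − t_{i+1})^{-3/4} ds ≤ 16 δ^{1/4}. Consequently, for a sequence of partitions whose mesh tends to 0, this quantity tends to 0. -/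
open MeasureTheory

-- auxiliary: (b - a) * b^(-3/4) ≤ 4 * (b^(1/4) - a^(1/4)) for 0 ≤ a ≤ b
lemma aux_diff (a b : ℝ) (ha : 0 ≤ a) (hab : a ≤ b) :
    (b - a) * b ^ (-(3 : ℝ) / 4) ≤ 4 * (b ^ ((1 : ℝ) / 4) - a ^ ((1 : ℝ) / 4)) := by
  rcases eq_or_lt_of_le (ha.trans hab) with hb | hb
  · simp [← hb, show a = 0 by linarith, Real.zero_rpow, (by norm_num : -(3:ℝ)/4 ≠ 0)]
  set x := a ^ ((1 : ℝ) / 4) with hx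
  set y := b ^ ((1 : ℝ) / 4) with hy
  have hx0 : 0 ≤ x := Real.rpow_nonneg ha _
  have hxy : x ≤ y := Real.rpow_le_rpow ha hab (by norm_num)
  have hx4 : x ^ (4 : ℕ) = a := by
    rw [hx, ← Real.rpow_natCast (a ^ ((1:ℝ)/4)) 4, ← Real.rpow_mul ha]
    norm_num
  have hy4 : y ^ (4 : ℕ) = b := by
    rw [hy, ← Real.rpow_natCast (b ^ ((1:ℝ)/4)) 4, ← Real.rpow_mul (ha.trans hab)]
    norm_num
  have hb34 : b ^ ((3 : ℝ) / 4) = y ^ (3 : ℕ) := by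
    rw [hy, ← Real.rpow_natCast (b ^ ((1:ℝ)/4)) 3, ← Real.rpow_mul (ha.trans hab)]
    norm_num
  have hbneg : b ^ (-(3 : ℝ) / 4) = (y ^ (3 : ℕ))⁻¹ := by
    rw [show -(3:ℝ)/4 = -((3:ℝ)/4) by ring, Real.rpow_neg (ha.trans hab), hb34]
  rw [hbneg, ← hx4, ← hy4]
  have hy0 : 0 < y := Real.rpow_pos_of_pos hb _
  have hy3 : (0:ℝ) < y ^ (3:ℕ) := by positivity
  rw [mul_inv_le_iff₀ hy3]
  nlinarith [sq_nonneg (y - x), sq_nonneg (y + x), mul_nonneg hx0 (sub_nonneg.2 hxy),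
    mul_nonneg (mul_nonneg hx0 hx0) (sub_nonneg.2 hxy)]

-- auxiliary: b^(1/4) - a^(1/4) ≤ (b - a)^(1/4) for 0 ≤ a ≤ b
lemma aux_sub (a b : ℝ) (ha : 0 ≤ a) (hab : a ≤ b) :
    b ^ ((1 : ℝ) / 4) - a ^ ((1 : ℝ) / 4) ≤ (b - a) ^ ((1 : ℝ) / 4) := by
  have hb : 0 ≤ b := ha.trans hab
  have hba : 0 ≤ b - a := sub_nonneg.2 hab
  set x := a ^ ((1 : ℝ) / 4)
  set z := (b - a) ^ ((1 : ℝ) / 4)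
  have hx0 : 0 ≤ x := Real.rpow_nonneg ha _
  have hz0 : 0 ≤ z := Real.rpow_nonneg hba _
  have hx4 : x ^ (4 : ℕ) = a := by
    rw [← Real.rpow_natCast (a ^ ((1:ℝ)/4)) 4, ← Real.rpow_mul ha]; norm_num
  have hz4 : z ^ (4 : ℕ) = b - a := by
    rw [← Real.rpow_natCast ((b-a) ^ ((1:ℝ)/4)) 4, ← Real.rpow_mul hba]; norm_num
  have hkey : b ≤ (x + z) ^ (4 : ℕ) := by
    nlinarith [mul_nonneg hx0 hz0, mul_nonneg (mul_nonneg hx0 hx0) hz0,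
      mul_nonneg (mul_nonneg hx0 hz0) hz0, sq_nonneg x, sq_nonneg z,
      mul_nonneg (mul_nonneg (mul_nonneg hx0 hx0) hx0) hz0,
      mul_nonneg (mul_nonneg (mul_nonneg hx0 hz0) hz0) hz0,
      mul_nonneg (mul_nonneg (mul_nonneg hx0 hx0) hz0) hz0]
  have : b ^ ((1:ℝ)/4) ≤ x + z := by
    calc b ^ ((1:ℝ)/4) ≤ ((x + z) ^ (4:ℕ)) ^ ((1:ℝ)/4) :=
          Real.rpow_le_rpow hb hkey (by norm_num)
      _ = x + z := by
          rw [← Real.rpow_natCast (x + z) 4, ← Real.rpow_mul (by positivity)]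
          norm_num
  linarith

/-- Let `0 < t_1 < ⋯ < t_N ≤ 1` be a partition with mesh
`δ = max_{1 ≤ k ≤ N-1} (t_{k+1} - t_k)`.  Then for every `j` with `1 ≤ j ≤ N-1`,
`∑_{i : t_{i+1} ≤ t_j} (t_{i+1} - t_i) t_{i+1}^(-3/4)
    ∫_{t_j}^{t_{j+1}} (s - t_{i+1})^(-3/4) ds ≤ 16 δ^(1/4)`.
Here the partition is encoded as `τ : Fin (n+1) → ℝ` (so `n = N - 1` successor
intervals, `t_j = τ j.castSucc` and `t_{j+1} = τ j.succ` for `j : Fin n`). -/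
theorem stmt_8 (n : ℕ) (τ : Fin (n + 1) → ℝ) (δ : ℝ)
    (hpos : 0 < τ 0) (hmono : StrictMono τ) (hlast : τ (Fin.last n) ≤ 1)
    (hδ : δ = ⨆ k : Fin n, (τ k.succ - τ k.castSucc)) :
    ∀ j : Fin n,
      (∑ i : Fin n,
        if τ i.succ ≤ τ j.castSucc then
          (τ i.succ - τ i.castSucc) * (τ i.succ) ^ (-(3 : ℝ) / 4) *
            ∫ s in Set.Ioc (τ j.castSucc) (τ j.succ), (s - τ i.succ) ^ (-(3 : ℝ) / 4)
        else 0)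
      ≤ 16 * δ ^ ((1 : ℝ) / 4) := by
  intro j
  have hτpos : ∀ k : Fin (n + 1), 0 < τ k := fun k =>
    lt_of_lt_of_le hpos (hmono.monotone (Fin.zero_le k))
  have hjlt : τ j.castSucc < τ j.succ := hmono (Fin.castSucc_lt_succ : j.castSucc < j.succ)
  -- mesh bounds
  have hδj : ∀ k : Fin n, τ k.succ - τ k.castSucc ≤ δ := by
    intro k
    rw [hδ]
    exact le_ciSup (f := fun k : Fin n => τ k.succ - τ k.castSucc)
      (Set.Finite.bddAbove (Set.finite_range _)) k
  have hδ0 : 0 ≤ δ := le_trans (by linarith) (hδj j)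
  -- key integral bound
  have hint : ∀ c : ℝ, c ≤ τ j.castSucc →
      (∫ s in Set.Ioc (τ j.castSucc) (τ j.succ), (s - c) ^ (-(3 : ℝ) / 4))
        ≤ 4 * δ ^ ((1 : ℝ) / 4) := by
    intro c hc
    have h1 : (∫ s in Set.Ioc (τ j.castSucc) (τ j.succ), (s - c) ^ (-(3 : ℝ) / 4))
        = ∫ s in (τ j.castSucc)..(τ j.succ), (s - c) ^ (-(3 : ℝ) / 4) :=
      (intervalIntegral.integral_of_le hjlt.le).symm
    have h2 : (∫ s in (τ j.castSucc)..(τ j.succ), (s - c) ^ (-(3 : ℝ) / 4))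
        = ∫ u in (τ j.castSucc - c)..(τ j.succ - c), u ^ (-(3 : ℝ) / 4) :=
      intervalIntegral.integral_comp_sub_right (fun u => u ^ (-(3 : ℝ) / 4)) c
    have h3 : (∫ u in (τ j.castSucc - c)..(τ j.succ - c), u ^ (-(3 : ℝ) / 4))
        = ((τ j.succ - c) ^ ((1:ℝ)/4) - (τ j.castSucc - c) ^ ((1:ℝ)/4)) / ((1:ℝ)/4) := by
      rw [integral_rpow (Or.inl (by norm_num))]
      norm_num
    rw [h1, h2, h3]
    have hA : 0 ≤ τ j.castSucc - c := sub_nonneg.2 hc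
    have hAB : τ j.castSucc - c ≤ τ j.succ - c := by linarith
    have := aux_sub _ _ hA hAB
    have hsub : (τ j.succ - c) - (τ j.castSucc - c) = τ j.succ - τ j.castSucc := by ring
    rw [hsub] at this
    have hrpow : (τ j.succ - τ j.castSucc) ^ ((1:ℝ)/4) ≤ δ ^ ((1:ℝ)/4) :=
      Real.rpow_le_rpow (by linarith) (hδj j) (by norm_num)
    rw [div_le_iff₀ (by norm_num : (0:ℝ) < (1:ℝ)/4)]
    linarith
  -- sum bound: ∑ (if cond then a_i else 0) ≤ 4
  set F : Fin (n + 1) → ℝ := fun k => (τ k) ^ ((1 : ℝ) / 4) with hF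
  have hsum4 : (∑ i : Fin n, if τ i.succ ≤ τ j.castSucc then
      (τ i.succ - τ i.castSucc) * (τ i.succ) ^ (-(3 : ℝ) / 4) else 0) ≤ 4 := by
    have hterm : ∀ i : Fin n,
        (if τ i.succ ≤ τ j.castSucc then
          (τ i.succ - τ i.castSucc) * (τ i.succ) ^ (-(3 : ℝ) / 4) else 0)
        ≤ 4 * (F i.succ - F i.castSucc) := by
      intro i
      have hle : (τ i.succ - τ i.castSucc) * (τ i.succ) ^ (-(3 : ℝ) / 4)
          ≤ 4 * (F i.succ - F i.castSucc) :=
        aux_diff _ _ (hτpos i.castSucc).le (hmono (Fin.castSucc_lt_succ : i.castSucc < i.succ)).le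
      have hnn : 0 ≤ 4 * (F i.succ - F i.castSucc) := by
        have : F i.castSucc ≤ F i.succ :=
          Real.rpow_le_rpow (hτpos _).le (hmono (Fin.castSucc_lt_succ : i.castSucc < i.succ)).le (by norm_num)
        linarith
      split <;> [exact hle; exact hnn]
    calc (∑ i : Fin n, if τ i.succ ≤ τ j.castSucc then
          (τ i.succ - τ i.castSucc) * (τ i.succ) ^ (-(3 : ℝ) / 4) else 0)
        ≤ ∑ i : Fin n, 4 * (F i.succ - F i.castSucc) :=
          Finset.sum_le_sum fun i _ => hterm i
      _ = 4 * ∑ i : Fin n, (F i.succ - F i.castSucc) := by rw [Finset.mul_sum]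
      _ ≤ 4 := by
          have htel : (∑ i : Fin n, (F i.succ - F i.castSucc)) = F (Fin.last n) - F 0 := by
            set G : ℕ → ℝ := fun k => F ⟨min k n, Nat.lt_succ_of_le (min_le_right _ _)⟩ with hG
            have : (∑ i : Fin n, (F i.succ - F i.castSucc))
                = ∑ k ∈ Finset.range n, (G (k + 1) - G k) := by
              rw [← Fin.sum_univ_eq_sum_range]
              refine Finset.sum_congr rfl fun i _ => ?_
              have e1 : (⟨min (↑i + 1) n, Nat.lt_succ_of_le (min_le_right _ _)⟩ : Fin (n+1))
                  = i.succ := Fin.ext (by have := i.isLt; simp only [Fin.val_succ]; omega)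
              have e2 : (⟨min (↑i : ℕ) n, Nat.lt_succ_of_le (min_le_right _ _)⟩ : Fin (n+1))
                  = i.castSucc := Fin.ext (by have := i.isLt; simp only [Fin.coe_castSucc]; omega)
              simp only [hG, e1, e2]
            rw [this, Finset.sum_range_sub]
            have e3 : (⟨min n n, Nat.lt_succ_of_le (min_le_right _ _)⟩ : Fin (n+1))
                = Fin.last n := Fin.ext (by simp)
            have e4 : (⟨min 0 n, Nat.lt_succ_of_le (min_le_right _ _)⟩ : Fin (n+1))
                = (0 : Fin (n+1)) := Fin.ext (by simp)
            simp only [hG, e3, e4]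
          rw [htel]
          have h1 : F (Fin.last n) ≤ 1 := by
            calc F (Fin.last n) ≤ (1:ℝ) ^ ((1:ℝ)/4) :=
                  Real.rpow_le_rpow (hτpos _).le hlast (by norm_num)
              _ = 1 := Real.one_rpow _
          have h0 : 0 ≤ F 0 := Real.rpow_nonneg (hτpos 0).le _
          linarith
  -- assembly
  have hC : 0 ≤ 4 * δ ^ ((1 : ℝ) / 4) := by positivity
  calc (∑ i : Fin n,
        if τ i.succ ≤ τ j.castSucc then
          (τ i.succ - τ i.castSucc) * (τ i.succ) ^ (-(3 : ℝ) / 4) *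
            ∫ s in Set.Ioc (τ j.castSucc) (τ j.succ), (s - τ i.succ) ^ (-(3 : ℝ) / 4)
        else 0)
      ≤ ∑ i : Fin n, (if τ i.succ ≤ τ j.castSucc then
          (τ i.succ - τ i.castSucc) * (τ i.succ) ^ (-(3 : ℝ) / 4) else 0)
          * (4 * δ ^ ((1 : ℝ) / 4)) := by
        refine Finset.sum_le_sum fun i _ => ?_
        split_ifs with h
        · have hnn : 0 ≤ (τ i.succ - τ i.castSucc) * (τ i.succ) ^ (-(3 : ℝ) / 4) := by
            have := hmono (Fin.castSucc_lt_succ : i.castSucc < i.succ)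
            have := Real.rpow_nonneg (hτpos i.succ).le (-(3 : ℝ) / 4)
            nlinarith
          exact mul_le_mul_of_nonneg_left (hint _ h) hnn
        · simp
    _ = (∑ i : Fin n, if τ i.succ ≤ τ j.castSucc then
          (τ i.succ - τ i.castSucc) * (τ i.succ) ^ (-(3 : ℝ) / 4) else 0)
          * (4 * δ ^ ((1 : ℝ) / 4)) := by rw [Finset.sum_mul]
    _ ≤ 4 * (4 * δ ^ ((1 : ℝ) / 4)) := mul_le_mul_of_nonneg_right hsum4 hC
    _ = 16 * δ ^ ((1 : ℝ) / 4) := by ring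
end
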